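/- Let u be a radial function in H¹(ℝ^{2N}) with N ≥ 1. Then for almost every x ∈ ℝ^{2N}, |u(x)| ≤ √((N−1)!/π^N) · ‖u‖_{L²}^{1/2} ‖∇u‖_{L²}^{1/2} / |x|^{N−1/2}. -/

import Mathlib

open MeasureTheory

section RadialAux

open Set Metric Measure
open scoped ENNReal

private lemma comp_isom_norm {E : Type*} [NormedAddCommGroup E] [NormedSpace ℝ E]
    (L : E →L[ℝ] ℝ) (T : E ≃ₗᵢ[ℝ] E) : ‖L.comp (T : E →L[ℝ] E)‖ = ‖L‖ := by
  refine le_antisymm ?_ ?_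
  · refine ContinuousLinearMap.opNorm_le_bound _ (norm_nonneg L) fun x => ?_
    calc ‖(L.comp (T : E →L[ℝ] E)) x‖ = ‖L (T x)‖ := rfl
      _ ≤ ‖L‖ * ‖T x‖ := L.le_opNorm _
      _ = ‖L‖ * ‖x‖ := by rw [T.norm_map]
  · refine ContinuousLinearMap.opNorm_le_bound _ (norm_nonneg _) fun x => ?_
    calc ‖L x‖ = ‖(L.comp (T : E →L[ℝ] E)) (T.symm x)‖ := by simp
      _ ≤ ‖L.comp (T : E →L[ℝ] E)‖ * ‖T.symm x‖ := ContinuousLinearMap.le_opNorm _ _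
      _ = ‖L.comp (T : E →L[ℝ] E)‖ * ‖x‖ := by rw [T.symm.norm_map]

private lemma fderiv_radial {E : Type*} [NormedAddCommGroup E] [InnerProductSpace ℝ E]
    [FiniteDimensional ℝ E]
    (u : E → ℝ) (hrad : ∀ x y : E, ‖x‖ = ‖y‖ → u x = u y) (hdiff : Differentiable ℝ u)
    {x y : E} (h : ‖x‖ = ‖y‖) : ‖fderiv ℝ u x‖ = ‖fderiv ℝ u y‖ := by
  set T := Submodule.reflection (ℝ ∙ (x - y))ᗮ with hT
  have hTx : T x = y := Submodule.reflection_sub h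
  have hcomp : u ∘ T = u := funext fun z => hrad (T z) z (T.norm_map z)
  have key : fderiv ℝ u x = (fderiv ℝ u (T x)).comp (T : E →L[ℝ] E) := by
    conv_lhs => rw [← hcomp]
    rw [fderiv_comp x (hdiff (T x)) T.differentiableAt, T.fderiv]
  rw [key, hTx, comp_isom_norm]

private lemma integrableOn_polar {E : Type*} [NormedAddCommGroup E] [NormedSpace ℝ E]
    [MeasurableSpace E] [BorelSpace E] [FiniteDimensional ℝ E] [Nontrivial E]
    (μ : Measure E) [μ.IsAddHaarMeasure] {f : ℝ → ℝ}
    (hf : Integrable (fun x => f ‖x‖) μ) :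
    IntegrableOn (fun y => y ^ (Module.finrank ℝ E - 1) * f y) (Ioi (0:ℝ)) volume := by
  set n := Module.finrank ℝ E - 1 with hn
  have h0 : MeasurableSet ({(0:E)} : Set E) := measurableSet_singleton 0
  have emb := MeasurableEmbedding.subtype_coe h0.compl
  have h1 : Integrable ((fun x : E => f ‖x‖) ∘ (Subtype.val : ({(0:E)}ᶜ : Set E) → E))
      (μ.comap Subtype.val) := by
    rw [← emb.integrable_map_iff, map_comap_subtype_coe h0.compl, restrict_compl_singleton]
    exact hf
  have h2 : Integrable ((fun p : ℝ => f p) ∘ Subtype.val ∘ Prod.snd)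
      (μ.toSphere.prod (volumeIoiPow n)) := by
    rw [← (μ.measurePreserving_homeomorphUnitSphereProd).integrable_comp_emb
      (Homeomorph.measurableEmbedding _)]
    refine h1.congr (Filter.Eventually.of_forall fun x => ?_)
    simp [Function.comp]
  have hsph : μ.toSphere ≠ 0 := by
    intro hz
    have h := μ.toSphere_apply_univ
    rw [hz] at h
    simp only [Measure.coe_zero, Pi.zero_apply] at h
    have hball : 0 < μ (ball (0:E) 1) := measure_ball_pos μ 0 one_pos
    have hdim : (0:ℝ≥0∞) < (Module.finrank ℝ E : ℝ≥0∞) := by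
      exact_mod_cast Nat.cast_pos.mpr Module.finrank_pos
    have : (0:ℝ≥0∞) < (Module.finrank ℝ E : ℝ≥0∞) * μ (ball (0:E) 1) :=
      ENNReal.mul_pos hdim.ne' hball.ne'
    rw [← h] at this
    exact lt_irrefl _ this
  have h3 := ((integrable_prod_iff h2.aestronglyMeasurable).mp h2).1
  haveI : (ae μ.toSphere).NeBot := ae_neBot.mpr hsph
  have h4 := h3.exists.choose_spec
  unfold Measure.volumeIoiPow at h4
  rw [integrable_withDensity_iff
    ((measurable_subtype_coe.pow_const n).ennreal_ofReal)
    (Filter.Eventually.of_forall fun x => ENNReal.ofReal_lt_top)] at h4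
  have h5 : Integrable ((fun y : ℝ => f y * (ENNReal.ofReal (y ^ n)).toReal) ∘
      (Subtype.val : Ioi (0:ℝ) → ℝ)) (volume.comap Subtype.val) := h4
  rw [← MeasurableEmbedding.integrable_map_iff (MeasurableEmbedding.subtype_coe measurableSet_Ioi),
    map_comap_subtype_coe measurableSet_Ioi] at h5
  refine (h5.congr ?_)
  filter_upwards [ae_restrict_mem measurableSet_Ioi] with y hy
  rw [ENNReal.toReal_ofReal (pow_nonneg (le_of_lt hy) n), mul_comm]

private lemma cs_oneD (d : ℕ) (v w : ℝ → ℝ) (hvc : Continuous v)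
    (hw : Measurable w) (hwnn : ∀ s, 0 ≤ w s)
    (hJ2 : IntegrableOn (fun s => s ^ (d-1) * v s ^ 2) (Ioi (0:ℝ)) volume)
    (hJG : IntegrableOn (fun s => s ^ (d-1) * w s ^ 2) (Ioi (0:ℝ)) volume) :
    ∫ s in Ioi (0:ℝ), s ^ (d-1) * (|v s| * w s) ≤
      Real.sqrt (∫ s in Ioi (0:ℝ), s ^ (d-1) * v s ^ 2) *
      Real.sqrt (∫ s in Ioi (0:ℝ), s ^ (d-1) * w s ^ 2) := by
  set μ₀ := volume.restrict (Ioi (0:ℝ))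
  set f₁ : ℝ → ℝ := fun s => Real.sqrt (s ^ (d-1)) * |v s| with hf₁
  set f₂ : ℝ → ℝ := fun s => Real.sqrt (s ^ (d-1)) * w s with hf₂
  have hm₁ : AEStronglyMeasurable f₁ μ₀ :=
    ((continuous_pow _).sqrt.mul hvc.abs).aestronglyMeasurable
  have hm₂ : AEStronglyMeasurable f₂ μ₀ :=
    (((continuous_pow _).sqrt.measurable).mul hw).aestronglyMeasurable
  have hae : ∀ᵐ s ∂μ₀, s ∈ Ioi (0:ℝ) := ae_restrict_mem measurableSet_Ioi
  have hsq₁ : Integrable (fun s => f₁ s ^ 2) μ₀ := by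
    refine hJ2.congr ?_
    filter_upwards [hae] with s hs
    have h0 : (0:ℝ) ≤ s ^ (d-1) := pow_nonneg (le_of_lt hs) _
    simp only [hf₁, mul_pow, Real.sq_sqrt h0, sq_abs]
  have hsq₂ : Integrable (fun s => f₂ s ^ 2) μ₀ := by
    refine hJG.congr ?_
    filter_upwards [hae] with s hs
    have h0 : (0:ℝ) ≤ s ^ (d-1) := pow_nonneg (le_of_lt hs) _
    simp only [hf₂, mul_pow, Real.sq_sqrt h0]
  have hM₁ : MemLp f₁ (ENNReal.ofReal 2) μ₀ := by
    rw [show ENNReal.ofReal 2 = 2 by norm_num]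
    exact (memLp_two_iff_integrable_sq hm₁).2 hsq₁
  have hM₂ : MemLp f₂ (ENNReal.ofReal 2) μ₀ := by
    rw [show ENNReal.ofReal 2 = 2 by norm_num]
    exact (memLp_two_iff_integrable_sq hm₂).2 hsq₂
  have hpq : Real.HolderConjugate 2 2 := Real.HolderConjugate.two_two
  have hCS := integral_mul_le_Lp_mul_Lq_of_nonneg hpq
    (Filter.Eventually.of_forall fun s => mul_nonneg (Real.sqrt_nonneg _) (abs_nonneg _))
    (Filter.Eventually.of_forall fun s => mul_nonneg (Real.sqrt_nonneg _) (hwnn s))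
    hM₁ hM₂
  calc ∫ s in Ioi (0:ℝ), s ^ (d-1) * (|v s| * w s) = ∫ s, f₁ s * f₂ s ∂μ₀ := by
        refine setIntegral_congr_ae measurableSet_Ioi ?_
        filter_upwards with s hs
        have h0 : (0:ℝ) ≤ s ^ (d-1) := pow_nonneg (le_of_lt hs) _
        simp only [hf₁, hf₂]
        rw [mul_mul_mul_comm, Real.mul_self_sqrt h0]
    _ ≤ (∫ s, f₁ s ^ (2:ℝ) ∂μ₀) ^ (1/(2:ℝ)) * (∫ s, f₂ s ^ (2:ℝ) ∂μ₀) ^ (1/(2:ℝ)) := hCS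
    _ = _ := by
        rw [← Real.sqrt_eq_rpow, ← Real.sqrt_eq_rpow]
        congr 2
        · refine setIntegral_congr_ae measurableSet_Ioi ?_
          filter_upwards with s hs
          have h0 : (0:ℝ) ≤ s ^ (d-1) := pow_nonneg (le_of_lt hs) _
          rw [show ((2:ℝ)) = ((2:ℕ):ℝ) by norm_num, Real.rpow_natCast]
          simp only [hf₁, mul_pow, Real.sq_sqrt h0, sq_abs]
        · refine setIntegral_congr_ae measurableSet_Ioi ?_
          filter_upwards with s hs
          have h0 : (0:ℝ) ≤ s ^ (d-1) := pow_nonneg (le_of_lt hs) _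
          rw [show ((2:ℝ)) = ((2:ℕ):ℝ) by norm_num, Real.rpow_natCast]
          simp only [hf₂, mul_pow, Real.sq_sqrt h0]

private lemma oneD_decay (d : ℕ) (hd : 2 ≤ d) (v v' w : ℝ → ℝ)
    (hv : ∀ s, HasDerivAt v (v' s) s)
    (hv'm : Measurable v') (hbd : ∀ s, |v' s| ≤ w s)
    (hw : Measurable w) (hwnn : ∀ s, 0 ≤ w s)
    (hJ2 : IntegrableOn (fun s => s ^ (d-1) * v s ^ 2) (Ioi (0:ℝ)) volume)
    (hJG : IntegrableOn (fun s => s ^ (d-1) * w s ^ 2) (Ioi (0:ℝ)) volume)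
    {r : ℝ} (hr : 0 < r) :
    r ^ (d-1) * v r ^ 2 ≤
      2 * (Real.sqrt (∫ s in Ioi (0:ℝ), s ^ (d-1) * v s ^ 2) *
      Real.sqrt (∫ s in Ioi (0:ℝ), s ^ (d-1) * w s ^ 2)) := by
  have hvc : Continuous v := by
    have : Differentiable ℝ v := fun s => (hv s).differentiableAt
    exact this.continuous
  set J2 := ∫ s in Ioi (0:ℝ), s ^ (d-1) * v s ^ 2 with hJ2d
  set JG := ∫ s in Ioi (0:ℝ), s ^ (d-1) * w s ^ 2 with hJGd
  set g : ℝ → ℝ := fun s => s ^ (d-1) * v s ^ 2 with hgdef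
  set G₁ : ℝ → ℝ := fun s => (↑(d-1) * s ^ (d-1-1)) * v s ^ 2 with hG₁
  set G₂ : ℝ → ℝ := fun s => s ^ (d-1) * (2 * v s * v' s) with hG₂
  have hg : ∀ s, HasDerivAt g (G₁ s + G₂ s) s := fun s => by
    have := (hasDerivAt_pow (d-1) s).mul ((hv s).pow 2)
    refine this.congr_deriv ?_
    simp only [hG₁, hG₂, Nat.cast_ofNat, show (2:ℕ) - 1 = 1 from rfl, pow_one, Pi.pow_apply]
  set F : ℝ → ℝ := fun s => s ^ (d-1) * (|v s| * w s) with hF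
  have hFm : AEStronglyMeasurable F (volume.restrict (Ioi (0:ℝ))) :=
    (((continuous_pow (d-1)).measurable).mul (hvc.abs.measurable.mul hw)).aestronglyMeasurable
  have hFint : IntegrableOn F (Ioi (0:ℝ)) volume := by
    refine Integrable.mono' ((hJ2.add hJG).const_mul (1/2)) hFm ?_
    filter_upwards [ae_restrict_mem measurableSet_Ioi] with s hs
    have h0 : (0:ℝ) ≤ s ^ (d-1) := pow_nonneg (le_of_lt hs) _
    have h1 : 0 ≤ F s := mul_nonneg h0 (mul_nonneg (abs_nonneg _) (hwnn s))
    rw [Real.norm_of_nonneg h1]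
    have h2 : |v s| * w s ≤ (v s ^ 2 + w s ^ 2) / 2 := by
      nlinarith [sq_nonneg (|v s| - w s), sq_abs (v s), abs_nonneg (v s), hwnn s]
    calc F s ≤ s ^ (d-1) * ((v s ^ 2 + w s ^ 2) / 2) := by
          exact mul_le_mul_of_nonneg_left h2 h0
      _ = 1/2 * (s ^ (d-1) * v s ^ 2 + s ^ (d-1) * w s ^ 2) := by ring
  have hFnn : ∀ s ∈ Ioi (0:ℝ), 0 ≤ F s := fun s hs =>
    mul_nonneg (pow_nonneg (le_of_lt hs) _) (mul_nonneg (abs_nonneg _) (hwnn s))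
  have hFtot : ∫ s in Ioi (0:ℝ), F s ≤ Real.sqrt J2 * Real.sqrt JG :=
    cs_oneD d v w hvc hw hwnn hJ2 hJG
  have main : ∀ R, r ≤ R → g r ≤ g R + 2 * (Real.sqrt J2 * Real.sqrt JG) := by
    intro R hrR
    have hsub : Ioc r R ⊆ Ioi (0:ℝ) := fun s hs => lt_of_lt_of_le hr hs.1.le
    have hG₂int : IntegrableOn G₂ (Ioc r R) volume := by
      refine Integrable.mono' ((hFint.mono_set hsub).const_mul 2) ?_ ?_
      · exact (((continuous_pow (d-1)).measurable).mul
          (((hvc.measurable.const_mul 2).mul hv'm))).aestronglyMeasurable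
      · filter_upwards [ae_restrict_mem measurableSet_Ioc] with s hs
        have hs0 : (0:ℝ) < s := lt_of_lt_of_le hr hs.1.le
        have h0 : (0:ℝ) ≤ s ^ (d-1) := pow_nonneg hs0.le _
        simp only [hG₂, Real.norm_eq_abs]
        rw [abs_mul, abs_of_nonneg h0]
        calc s ^ (d-1) * |2 * v s * v' s| = s ^ (d-1) * (2 * |v s| * |v' s|) := by
              rw [abs_mul, abs_mul, abs_two]
          _ ≤ s ^ (d-1) * (2 * |v s| * w s) := by
              refine mul_le_mul_of_nonneg_left ?_ h0
              exact mul_le_mul_of_nonneg_left (hbd s) (by positivity)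
          _ = 2 * F s := by simp only [hF]; ring
    have hG₂ii : IntervalIntegrable G₂ volume r R := by
      rw [intervalIntegrable_iff_integrableOn_Ioc_of_le hrR]; exact hG₂int
    have hG₁ii : IntervalIntegrable G₁ volume r R :=
      ((continuous_const.mul (continuous_pow _)).mul (hvc.pow 2)).intervalIntegrable r R
    have hFTC : ∫ s in r..R, (G₁ s + G₂ s) = g R - g r :=
      intervalIntegral.integral_eq_sub_of_hasDerivAt (fun s _ => hg s) (hG₁ii.add hG₂ii)
    have hsplit : ∫ s in r..R, (G₁ s + G₂ s) = (∫ s in r..R, G₁ s) + ∫ s in r..R, G₂ s :=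
      intervalIntegral.integral_add hG₁ii hG₂ii
    have h₁ : 0 ≤ ∫ s in r..R, G₁ s := by
      refine intervalIntegral.integral_nonneg hrR fun s hs => ?_
      have : (0:ℝ) ≤ s := le_trans hr.le hs.1
      positivity
    have h₂ : |∫ s in r..R, G₂ s| ≤ 2 * (Real.sqrt J2 * Real.sqrt JG) := by
      have hbd2 : ∀ᵐ s ∂(volume.restrict (Ioc r R)), |G₂ s| ≤ 2 * F s := by
        filter_upwards [ae_restrict_mem measurableSet_Ioc] with s hs
        have hs0 : (0:ℝ) < s := lt_of_lt_of_le hr hs.1.le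
        have h0 : (0:ℝ) ≤ s ^ (d-1) := pow_nonneg hs0.le _
        simp only [hG₂]
        rw [abs_mul, abs_of_nonneg h0]
        calc s ^ (d-1) * |2 * v s * v' s| = s ^ (d-1) * (2 * |v s| * |v' s|) := by
              rw [abs_mul, abs_mul, abs_two]
          _ ≤ s ^ (d-1) * (2 * |v s| * w s) := by
              refine mul_le_mul_of_nonneg_left ?_ h0
              exact mul_le_mul_of_nonneg_left (hbd s) (by positivity)
          _ = 2 * F s := by simp only [hF]; ring
      have habs : |∫ s in r..R, G₂ s| ≤ ∫ s in Ioc r R, |G₂ s| := by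
        have := intervalIntegral.abs_integral_le_integral_abs (f := G₂) (μ := volume) hrR
        rwa [intervalIntegral.integral_of_le hrR (f := fun s => |G₂ s|)] at this
      have h2a : ∫ s in Ioc r R, |G₂ s| ≤ ∫ s in Ioc r R, 2 * F s :=
        integral_mono_ae hG₂int.abs ((hFint.mono_set hsub).const_mul 2) hbd2
      have h2b : ∫ s in Ioc r R, 2 * F s = 2 * ∫ s in Ioc r R, F s := by
        exact integral_const_mul 2 F
      have h2c : ∫ s in Ioc r R, F s ≤ ∫ s in Ioi (0:ℝ), F s := by
        refine setIntegral_mono_set hFint ?_ (HasSubset.Subset.eventuallyLE hsub)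
        filter_upwards [ae_restrict_mem measurableSet_Ioi] with s hs
        exact hFnn s hs
      calc |∫ s in r..R, G₂ s| ≤ ∫ s in Ioc r R, |G₂ s| := habs
        _ ≤ 2 * ∫ s in Ioc r R, F s := by rw [← h2b]; exact h2a
        _ ≤ 2 * ∫ s in Ioi (0:ℝ), F s := by linarith
        _ ≤ 2 * (Real.sqrt J2 * Real.sqrt JG) := by linarith
    have : g R - g r ≥ -(2 * (Real.sqrt J2 * Real.sqrt JG)) := by
      rw [← hFTC, hsplit]
      have := neg_abs_le (∫ s in r..R, G₂ s)
      linarith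
    linarith
  have hlim : ∀ ε > 0, ∃ R, r ≤ R ∧ g R < ε := by
    intro ε hε
    by_contra hcon
    push_neg at hcon
    have hconst : Integrable (fun _ : ℝ => ε) (volume.restrict (Ioi r)) := by
      refine Integrable.mono' (hJ2.mono_set fun s hs => lt_trans hr hs) ?_ ?_
      · exact aestronglyMeasurable_const
      · filter_upwards [ae_restrict_mem measurableSet_Ioi] with s hs
        rw [Real.norm_of_nonneg hε.le]
        exact hcon s (le_of_lt hs)
    rcases integrable_const_iff.mp hconst with h | h
    · exact absurd h hε.ne'
    · rw [isFiniteMeasure_restrict, Real.volume_Ioi] at h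
      exact absurd h (by simp)
  have hfin : ∀ ε > 0, g r ≤ 2 * (Real.sqrt J2 * Real.sqrt JG) + ε := by
    intro ε hε
    obtain ⟨R, hrR, hgR⟩ := hlim ε hε
    have := main R hrR
    linarith
  exact le_of_forall_pos_le_add hfin

end RadialAux

theorem radial_estimate_H1
    (N : ℕ) (hN : 1 ≤ N)
    (u : EuclideanSpace ℝ (Fin (2 * N)) → ℝ)
    (hrad : ∀ x y : EuclideanSpace ℝ (Fin (2 * N)), ‖x‖ = ‖y‖ → u x = u y)
    (hdiff : Differentiable ℝ u)
    (hu2 : Integrable (fun x => u x ^ 2))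
    (hgrad2 : Integrable (fun x => ‖fderiv ℝ u x‖ ^ 2)) :
    ∀ᵐ x : EuclideanSpace ℝ (Fin (2 * N)),
      |u x| ≤ Real.sqrt ((Nat.factorial (N - 1)) / Real.pi ^ N) *
        Real.sqrt (Real.sqrt (∫ y, u y ^ 2)) *
        Real.sqrt (Real.sqrt (∫ y, ‖fderiv ℝ u y‖ ^ 2)) / ‖x‖ ^ ((N : ℝ) - 1 / 2) := by
  classical
  have hd : 2 ≤ 2*N := by omega
  haveI : Nonempty (Fin (2*N)) := ⟨⟨0, by omega⟩⟩
  set e : EuclideanSpace ℝ (Fin (2*N)) := EuclideanSpace.single ⟨0, by omega⟩ (1:ℝ) with he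
  have hnorme : ‖e‖ = 1 := by rw [he, EuclideanSpace.norm_single]; norm_num
  haveI : Nontrivial (EuclideanSpace ℝ (Fin (2*N))) := by
    refine nontrivial_of_ne e 0 fun h => ?_
    rw [h, norm_zero] at hnorme; norm_num at hnorme
  have hfr : Module.finrank ℝ (EuclideanSpace ℝ (Fin (2*N))) = 2*N := finrank_euclideanSpace_fin
  set v : ℝ → ℝ := fun s => u (s • e) with hv
  set v' : ℝ → ℝ := fun s => fderiv ℝ u (s • e) e with hv'
  set w : ℝ → ℝ := fun s => ‖fderiv ℝ u (s • e)‖ with hw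
  have hsmul : ∀ s : ℝ, 0 ≤ s → ‖s • e‖ = s := fun s hs => by
    rw [norm_smul, hnorme, mul_one, Real.norm_eq_abs, abs_of_nonneg hs]
  have hvderiv : ∀ s, HasDerivAt v (v' s) s := fun s => by
    have h1 : HasDerivAt (fun t : ℝ => t • e) e s := by
      simpa using (hasDerivAt_id s).smul_const e
    exact (hdiff (s • e)).hasFDerivAt.comp_hasDerivAt s h1
  have hsme : Measurable (fun s : ℝ => s • e) :=
    (continuous_id.smul continuous_const).measurable
  have hv'm : Measurable v' := (measurable_fderiv_apply_const ℝ u e).comp hsme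
  have hbd : ∀ s, |v' s| ≤ w s := fun s => by
    rw [← Real.norm_eq_abs]
    calc ‖fderiv ℝ u (s • e) e‖ ≤ ‖fderiv ℝ u (s • e)‖ * ‖e‖ :=
          ContinuousLinearMap.le_opNorm _ _
      _ = w s := by rw [hnorme, mul_one]
  have hwm : Measurable w := ((measurable_fderiv ℝ u).norm).comp hsme
  have hwnn : ∀ s, 0 ≤ w s := fun s => norm_nonneg _
  have hurad : ∀ x : EuclideanSpace ℝ (Fin (2*N)), u x = v ‖x‖ := fun x =>
    hrad x (‖x‖ • e) (hsmul _ (norm_nonneg x)).symm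
  have hgradrad : ∀ x : EuclideanSpace ℝ (Fin (2*N)), ‖fderiv ℝ u x‖ = w ‖x‖ := fun x =>
    fderiv_radial u hrad hdiff (hsmul _ (norm_nonneg x)).symm
  set c : ℝ := (2*N : ℕ) * (volume (Metric.ball (0 : EuclideanSpace ℝ (Fin (2*N))) 1)).toReal
    with hc
  have hcnn : 0 ≤ c := mul_nonneg (Nat.cast_nonneg _) ENNReal.toReal_nonneg
  set J2 := ∫ s in Set.Ioi (0:ℝ), s ^ (2*N-1) * v s ^ 2 with hJ2def
  set JG := ∫ s in Set.Ioi (0:ℝ), s ^ (2*N-1) * w s ^ 2 with hJGdef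
  have hI2eq : ∫ y, u y ^ 2 = c * J2 := by
    have h := integral_fun_norm_addHaar (volume : Measure (EuclideanSpace ℝ (Fin (2*N))))
      (fun s => v s ^ 2)
    rw [hfr] at h
    calc ∫ y, u y ^ 2 = ∫ y : EuclideanSpace ℝ (Fin (2*N)), v ‖y‖ ^ 2 := by
          congr 1; funext y; rw [hurad y]
      _ = c * J2 := by
          rw [h]
          simp only [nsmul_eq_mul, smul_eq_mul]
          rw [hc, hJ2def, ← mul_assoc, measureReal_def]
  have hIGeq : ∫ y, ‖fderiv ℝ u y‖ ^ 2 = c * JG := by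
    have h := integral_fun_norm_addHaar (volume : Measure (EuclideanSpace ℝ (Fin (2*N))))
      (fun s => w s ^ 2)
    rw [hfr] at h
    calc ∫ y, ‖fderiv ℝ u y‖ ^ 2 = ∫ y : EuclideanSpace ℝ (Fin (2*N)), w ‖y‖ ^ 2 := by
          congr 1; funext y; rw [hgradrad y]
      _ = c * JG := by
          rw [h]
          simp only [nsmul_eq_mul, smul_eq_mul]
          rw [hc, hJGdef, ← mul_assoc, measureReal_def]
  have hint2 : IntegrableOn (fun s => s ^ (2*N-1) * v s ^ 2) (Set.Ioi (0:ℝ)) volume := by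
    have h := integrableOn_polar (volume : Measure (EuclideanSpace ℝ (Fin (2*N))))
      (f := fun s => v s ^ 2) (by
        refine hu2.congr ?_
        filter_upwards with x
        rw [hurad x])
    rwa [hfr] at h
  have hintG : IntegrableOn (fun s => s ^ (2*N-1) * w s ^ 2) (Set.Ioi (0:ℝ)) volume := by
    have h := integrableOn_polar (volume : Measure (EuclideanSpace ℝ (Fin (2*N))))
      (f := fun s => w s ^ 2) (by
        refine hgrad2.congr ?_
        filter_upwards with x
        rw [hgradrad x])
    rwa [hfr] at h
  have hJ2nn : 0 ≤ J2 := setIntegral_nonneg measurableSet_Ioi fun s hs => by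
    have h0 : (0:ℝ) < s := hs
    positivity
  have hJGnn : 0 ≤ JG := setIntegral_nonneg measurableSet_Ioi fun s hs => by
    have h0 : (0:ℝ) < s := hs
    positivity
  have key : ∀ r : ℝ, 0 < r → r ^ (2*N-1) * v r ^ 2 ≤ 2 * (Real.sqrt J2 * Real.sqrt JG) :=
    fun r hr => oneD_decay (2*N) hd v v' w hvderiv hv'm hbd hwm hwnn hint2 hintG hr
  have hcval : c = 2 * Real.pi ^ N / (Nat.factorial (N-1)) := by
    rw [hc, EuclideanSpace.volume_ball]
    simp only [Fintype.card_fin]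
    rw [ENNReal.ofReal_one, one_pow, one_mul, ENNReal.toReal_ofReal (by positivity)]
    have h1 : Real.sqrt Real.pi ^ (2*N) = Real.pi ^ N := by
      rw [pow_mul, Real.sq_sqrt Real.pi_nonneg]
    have h2 : ((2*N : ℕ) : ℝ)/2 + 1 = ((N:ℕ) : ℝ) + 1 := by push_cast; ring
    rw [h1, h2, Real.Gamma_nat_eq_factorial]
    have h3 : (N.factorial : ℝ) = N * (N-1).factorial := by
      conv_lhs => rw [show N = (N-1) + 1 by omega]
      rw [Nat.factorial_succ]
      push_cast [show N - 1 + 1 = N by omega]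
      ring
    rw [h3]
    have hNf : ((N-1).factorial : ℝ) ≠ 0 := Nat.cast_ne_zero.mpr (Nat.factorial_ne_zero _)
    have hN0 : (N:ℝ) ≠ 0 := Nat.cast_ne_zero.mpr (by omega)
    field_simp
    push_cast
    ring
  set K : ℝ := (Nat.factorial (N-1)) / Real.pi ^ N with hK
  have hKnn : 0 ≤ K := by positivity
  have hKc : K * c = 2 := by
    rw [hK, hcval]
    have h1 : ((N-1).factorial : ℝ) ≠ 0 := Nat.cast_ne_zero.mpr (Nat.factorial_ne_zero _)
    have h2 : Real.pi ^ N ≠ 0 := by positivity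
    field_simp
  set B : ℝ := 2 * (Real.sqrt J2 * Real.sqrt JG) with hB
  have hBnn : 0 ≤ B := by positivity
  have hnum : Real.sqrt K * Real.sqrt (Real.sqrt (∫ y, u y ^ 2)) *
      Real.sqrt (Real.sqrt (∫ y, ‖fderiv ℝ u y‖ ^ 2)) = Real.sqrt B := by
    rw [hI2eq, hIGeq, Real.sqrt_mul hcnn J2, Real.sqrt_mul hcnn JG,
      Real.sqrt_mul (Real.sqrt_nonneg c) (Real.sqrt J2),
      Real.sqrt_mul (Real.sqrt_nonneg c) (Real.sqrt JG), hB,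
      Real.sqrt_mul (by norm_num : (0:ℝ) ≤ 2) (Real.sqrt J2 * Real.sqrt JG),
      Real.sqrt_mul (Real.sqrt_nonneg J2) (Real.sqrt JG)]
    have e1 : Real.sqrt (Real.sqrt c) * Real.sqrt (Real.sqrt c) = Real.sqrt c :=
      Real.mul_self_sqrt (Real.sqrt_nonneg c)
    have e2 : Real.sqrt K * Real.sqrt c = Real.sqrt 2 := by
      rw [← Real.sqrt_mul hKnn c, hKc]
    calc Real.sqrt K * (Real.sqrt (Real.sqrt c) * Real.sqrt (Real.sqrt J2)) *
          (Real.sqrt (Real.sqrt c) * Real.sqrt (Real.sqrt JG))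
        = (Real.sqrt K * (Real.sqrt (Real.sqrt c) * Real.sqrt (Real.sqrt c))) *
          (Real.sqrt (Real.sqrt J2) * Real.sqrt (Real.sqrt JG)) := by ring
      _ = (Real.sqrt K * Real.sqrt c) *
          (Real.sqrt (Real.sqrt J2) * Real.sqrt (Real.sqrt JG)) := by rw [e1]
      _ = Real.sqrt 2 * (Real.sqrt (Real.sqrt J2) * Real.sqrt (Real.sqrt JG)) := by rw [e2]
      _ = _ := by ring
  have hmes : ∀ᵐ x : EuclideanSpace ℝ (Fin (2*N)), x ≠ 0 := by
    have h0 : volume ({(0 : EuclideanSpace ℝ (Fin (2*N)))} : Set _) = 0 := measure_singleton 0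
    have := measure_eq_zero_iff_ae_notMem.mp h0
    filter_upwards [this] with x hx
    simpa using hx
  filter_upwards [hmes] with x hx
  have hrpos : 0 < ‖x‖ := norm_pos_iff.mpr hx
  set r : ℝ := ‖x‖ with hrdef
  set t : ℝ := r ^ ((N:ℝ) - 1/2) with ht
  have htpos : 0 < t := Real.rpow_pos_of_pos hrpos _
  have ht2 : t ^ 2 = r ^ (2*N-1) := by
    rw [ht, ← Real.rpow_natCast (r ^ ((N:ℝ) - 1/2)) 2, ← Real.rpow_mul hrpos.le]
    rw [show ((N:ℝ) - 1/2) * ((2:ℕ):ℝ) = ((2*N-1 : ℕ):ℝ) by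
      rw [Nat.cast_sub (by omega)]; push_cast; ring]
    rw [Real.rpow_natCast]
  have hineq : |v r| * t ≤ Real.sqrt B := by
    rw [← Real.sqrt_sq (mul_nonneg (abs_nonneg _) htpos.le)]
    apply Real.sqrt_le_sqrt
    rw [mul_pow, sq_abs, ht2]
    calc v r ^ 2 * r ^ (2*N-1) = r ^ (2*N-1) * v r ^ 2 := by ring
      _ ≤ B := key r hrpos
  rw [hurad x, hnum, le_div_iff₀ htpos]
  exact hineq
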